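/- Let w_1 ∈ K, let (g_t)_{t≥1} be arbitrary vectors of H, let (η_t)_{t≥1} be a nonincreasing sequence of positive reals, and define the projected sub-gradient descent iterates w_{t+1} = Π_K(w_t − η_t g_t) for t ≥ 1. Then for every w* ∈ K and every T ≥ 1, the linearized regret satisfies ∑_{t=1}^T ⟨g_t, w_t − w*⟩ ≤ D²/(2 η_T) + ∑_{t=1}^T (η_t/2)‖g_t‖². -/

import Mathlib

open Finset
open scoped RealInnerProductSpace

/-- regret bound for projected sub-gradient descent with
nonincreasing positive step sizes. -/
theorem stmt0
    {H : Type*} [NormedAddCommGroup H] [InnerProductSpace ℝ H]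
    (K : Set H) (hKne : K.Nonempty) (hKclosed : IsClosed K) (hKconvex : Convex ℝ K)
    (D : ℝ) (hD : ∀ w ∈ K, ∀ v ∈ K, ‖w - v‖ ≤ D)
    (proj : H → H)
    (hproj_mem : ∀ v, proj v ∈ K)
    (hproj_min : ∀ v, ∀ u ∈ K, ‖v - proj v‖ ≤ ‖v - u‖)
    (g : ℕ → H) (η : ℕ → ℝ)
    (hηpos : ∀ t, 1 ≤ t → 0 < η t)
    (hηanti : ∀ s t, 1 ≤ s → s ≤ t → η t ≤ η s)
    (w : ℕ → H) (hw1 : w 1 ∈ K)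
    (hiter : ∀ t, 1 ≤ t → w (t + 1) = proj (w t - η t • g t))
    (wstar : H) (hwstar : wstar ∈ K)
    (T : ℕ) (hT : 1 ≤ T) :
    (∑ t ∈ Icc 1 T, ⟪g t, w t - wstar⟫) ≤
      D ^ 2 / (2 * η T) + ∑ t ∈ Icc 1 T, η t / 2 * ‖g t‖ ^ 2 := by
  have hD0 : 0 ≤ D := by simpa using hD _ hw1 _ hw1
  -- all iterates stay in K
  have hwK : ∀ t, 1 ≤ t → w t ∈ K := by
    intro t ht
    induction t with
    | zero => omega
    | succ n ih =>
      rcases Nat.lt_or_ge n 1 with h | h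
      · interval_cases n
        simpa using hw1
      · rw [hiter n h]; exact hproj_mem _
  -- obtuse angle property of projection
  have hproj_inner : ∀ v, ∀ u ∈ K, ⟪v - proj v, u - proj v⟫ ≤ 0 := by
    intro v u hu
    haveI : Nonempty K := hKne.to_subtype
    have hiInf : ‖v - proj v‖ = ⨅ x : K, ‖v - (x : H)‖ := by
      apply le_antisymm
      · exact le_ciInf fun x => hproj_min v x x.2
      · exact ciInf_le ⟨0, Set.forall_mem_range.2 fun x => norm_nonneg _⟩ (⟨proj v, hproj_mem v⟩ : K)
    exact (norm_eq_iInf_iff_real_inner_le_zero hKconvex (hproj_mem v)).mp hiInf u hu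
  -- nonexpansiveness toward wstar (squared)
  have hnonexp : ∀ v, ‖proj v - wstar‖ ^ 2 ≤ ‖v - wstar‖ ^ 2 := by
    intro v
    have h1 : ⟪v - proj v, wstar - proj v⟫ ≤ 0 := hproj_inner v wstar hwstar
    have hexp := norm_add_sq_real (v - proj v) (proj v - wstar)
    rw [show (v - proj v) + (proj v - wstar) = v - wstar by abel] at hexp
    have h2 : ⟪v - proj v, proj v - wstar⟫ = - ⟪v - proj v, wstar - proj v⟫ := by
      rw [← inner_neg_right]; congr 1; abel
    nlinarith [sq_nonneg ‖v - proj v‖]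
  set a : ℕ → ℝ := fun t => ‖w t - wstar‖ ^ 2 with ha
  have ha0 : ∀ t, 0 ≤ a t := fun t => sq_nonneg _
  have haD : ∀ t, 1 ≤ t → a t ≤ D ^ 2 := by
    intro t ht
    have h1 := hD _ (hwK t ht) _ hwstar
    have h2 := norm_nonneg (w t - wstar)
    show ‖w t - wstar‖ ^ 2 ≤ D ^ 2
    nlinarith
  set b : ℕ → ℝ := fun t => (2 * η t)⁻¹ with hb
  have hbpos : ∀ t, 1 ≤ t → 0 < b t := by
    intro t ht
    have := hηpos t ht
    positivity
  have hbmono : ∀ s t, 1 ≤ s → s ≤ t → b s ≤ b t := by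
    intro s t hs hst
    have h1 := hηpos t (le_trans hs hst)
    have h2 := hηanti s t hs hst
    have h3 := hηpos s hs
    show (2 * η s)⁻¹ ≤ (2 * η t)⁻¹
    exact inv_anti₀ (by linarith) (by linarith)
  -- per-step inequality
  have hstep : ∀ t, 1 ≤ t →
      ⟪g t, w t - wstar⟫ ≤ (a t - a (t + 1)) * b t + η t / 2 * ‖g t‖ ^ 2 := by
    intro t ht
    have hη := hηpos t ht
    have hat : a t = ‖w t - wstar‖ ^ 2 := rfl
    have key : a (t + 1) ≤ a t - 2 * η t * ⟪g t, w t - wstar⟫ + η t ^ 2 * ‖g t‖ ^ 2 := by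
      have h1 : a (t + 1) ≤ ‖(w t - η t • g t) - wstar‖ ^ 2 := by
        show ‖w (t + 1) - wstar‖ ^ 2 ≤ _
        rw [hiter t ht]; exact hnonexp _
      have h2 := norm_sub_sq_real (w t - wstar) (η t • g t)
      rw [show (w t - wstar) - η t • g t = (w t - η t • g t) - wstar by abel] at h2
      rw [h2, inner_smul_right, real_inner_comm, norm_smul] at h1
      simp only [Real.norm_eq_abs, mul_pow, sq_abs] at h1
      rw [hat]
      nlinarith
    have hbmul : b t * (2 * η t) = 1 := by
      show (2 * η t)⁻¹ * (2 * η t) = 1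
      exact inv_mul_cancel₀ (by positivity)
    have h3 : (2 * η t * ⟪g t, w t - wstar⟫ - η t ^ 2 * ‖g t‖ ^ 2) * b t
        ≤ (a t - a (t + 1)) * b t :=
      mul_le_mul_of_nonneg_right (by linarith) (hbpos t ht).le
    have h4 : (2 * η t * ⟪g t, w t - wstar⟫ - η t ^ 2 * ‖g t‖ ^ 2) * b t
        = ⟪g t, w t - wstar⟫ - η t / 2 * ‖g t‖ ^ 2 := by
      linear_combination (⟪g t, w t - wstar⟫ - η t / 2 * ‖g t‖ ^ 2) * hbmul
    linarith
  -- strengthened induction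
  have main : ∀ T, 1 ≤ T →
      (∑ t ∈ Icc 1 T, ⟪g t, w t - wstar⟫) ≤
        D ^ 2 * b T - a (T + 1) * b T + ∑ t ∈ Icc 1 T, η t / 2 * ‖g t‖ ^ 2 := by
    intro T hT
    induction T with
    | zero => omega
    | succ n ih =>
      rcases Nat.lt_or_ge n 1 with h | h
      · interval_cases n
        simp only [Finset.Icc_self, Finset.sum_singleton]
        have h1 := hstep 1 le_rfl
        have h2 := haD 1 le_rfl
        have h3 := hbpos 1 le_rfl
        nlinarith [mul_nonneg (by linarith : (0:ℝ) ≤ D ^ 2 - a 1) h3.le]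
      · have ihn := ih h
        rw [Finset.sum_Icc_succ_top (by omega : 1 ≤ n + 1),
            Finset.sum_Icc_succ_top (by omega : 1 ≤ n + 1)]
        have hs := hstep (n + 1) (by omega)
        have hbm := hbmono n (n + 1) h (by omega)
        have haDn := haD (n + 1) (by omega)
        have ha0n := ha0 (n + 2)
        have hbp := hbpos (n + 1) (by omega)
        have hbp2 := hbpos n h
        nlinarith [mul_nonneg (by linarith : (0:ℝ) ≤ D ^ 2 - a (n + 1)) (by linarith : (0:ℝ) ≤ b (n + 1) - b n)]
  have := main T hT
  have hbT : b T = 1 / (2 * η T) := by simp [hb, one_div]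
  have hbp := hbpos T hT
  have ha0T := ha0 (T + 1)
  have : (∑ t ∈ Icc 1 T, ⟪g t, w t - wstar⟫) ≤
      D ^ 2 * b T + ∑ t ∈ Icc 1 T, η t / 2 * ‖g t‖ ^ 2 := by
    nlinarith [mul_nonneg ha0T hbp.le]
  calc (∑ t ∈ Icc 1 T, ⟪g t, w t - wstar⟫)
      ≤ D ^ 2 * b T + ∑ t ∈ Icc 1 T, η t / 2 * ‖g t‖ ^ 2 := this
    _ = D ^ 2 / (2 * η T) + ∑ t ∈ Icc 1 T, η t / 2 * ‖g t‖ ^ 2 := by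
        rw [hbT]; ring
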